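/- For all x, y in V, one has (1/2)(Ω(x) + Ω(y) + sqrt((Ω(x) − Ω(y))² + K(x,y))) ≤ Ω(x) + Ω(y), where K(x,y) := max(‖⟨x, y⟩‖_A, ‖θ_{x,y}‖) and θ_{x,y} : V → V is the bounded linear operator θ_{x,y}(z) = x⟨y, z⟩. -/

import Mathlib

/-!
Setting: `A` is a C*-algebra and `V` is a Hilbert C*-module over `A`.
`WithCStarModule Aᵐᵒᵖ (A × V)` is the Hilbert `A`-module `A ⊕ V`, with inner product
`⟪(a, y), (b, z)⟫ = a * b + ⟪y, z⟫` and norm `‖(a, y)‖ = ‖a * a + ⟪y, y⟫‖ ^ (1/2)`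
(both provided by Mathlib).  For `x : V` and `lam : ℂ` with `|lam| = 1`, the operator
`M_{x,lam} : A ⊕ V → A ⊕ V`, `(a, y) ↦ (conj lam • ⟪x, y⟫, lam • (x <• a))` is encoded
by a family `M` of continuous linear maps satisfying the predicate `IsM` below, and the
numerical radius is `numRadius M x = (1/2) * sup_{|lam| = 1} ‖M x lam‖`.
-/

open scoped RightActions InnerProductSpace

noncomputable section

/-- The Hilbert C⋆-module class as it stood in the older Mathlib: a right `A`-module
(`SMul Aᵐᵒᵖ E`) with `⟪x, y <• a⟫ = ⟪x, y⟫ * a`. -/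
class CStarModuleOld (A : outParam <| Type*) (E : Type*) [NonUnitalSemiring A] [StarRing A] [Module ℂ A]
    [AddCommGroup E] [Module ℂ E] [PartialOrder A] [SMul Aᵐᵒᵖ E] [Norm A] [Norm E]
    extends Inner A E where
  inner_add_right {x} {y} {z} : inner x (y + z) = inner x y + inner x z
  inner_self_nonneg {x} : 0 ≤ inner x x
  inner_self {x} : inner x x = 0 ↔ x = 0
  inner_op_smul_right {a : A} {x y : E} : inner x (y <• a) = inner x y * a
  inner_smul_right_complex {z : ℂ} {x} {y} : inner x (z • y) = z • inner x y
  star_inner x y : star (inner x y) = inner y x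
  norm_eq_sqrt_norm_inner_self x : ‖x‖ = √‖inner x x‖

/-- The older Mathlib's C⋆-algebra as a C⋆-module over itself: `⟪x, y⟫ = star x * y`. -/
instance CStarModuleOld.instSelf {A : Type*} [NonUnitalCStarAlgebra A] [PartialOrder A]
    [StarOrderedRing A] : CStarModuleOld A A where
  inner x y := star x * y
  inner_add_right := mul_add ..
  inner_self_nonneg := star_mul_self_nonneg _
  inner_self := CStarRing.star_mul_self_eq_zero_iff _
  inner_op_smul_right := by
    intro a x y
    simp [MulOpposite.smul_eq_mul_unop, mul_assoc]
  inner_smul_right_complex := mul_smul_comm ..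
  star_inner x y := by simp
  norm_eq_sqrt_norm_inner_self x := by
    rw [CStarRing.norm_star_mul_self, Real.sqrt_mul_self (norm_nonneg _)]

/-- An old-style (right) C⋆-module over `A` is a current-style C⋆-module over `Aᵐᵒᵖ`,
with inner product `op ⟪x, y⟫`. -/
instance CStarModuleOld.toCStarModuleOp {A E : Type*} [NonUnitalCStarAlgebra A]
    [PartialOrder A] [NormedAddCommGroup E] [Module ℂ E] [SMul Aᵐᵒᵖ E]
    [CStarModuleOld A E] : CStarModule Aᵐᵒᵖ E where
  inner x y := MulOpposite.op (inner A x y)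
  inner_add_right := by
    intro x y z
    rw [CStarModuleOld.inner_add_right, MulOpposite.op_add]
  inner_self_nonneg := by
    intro x
    exact CStarModuleOld.inner_self_nonneg (A := A) (x := x)
  inner_self := by
    intro x
    rw [MulOpposite.op_eq_zero_iff]
    exact CStarModuleOld.inner_self
  inner_op_smul_right := by
    intro a x y
    have h := CStarModuleOld.inner_op_smul_right (A := A) (a := MulOpposite.unop a) (x := x) (y := y)
    simp only [MulOpposite.op_unop] at h
    rw [h, MulOpposite.op_mul, MulOpposite.op_unop]
  inner_smul_right_complex := by
    intro z x y
    rw [CStarModuleOld.inner_smul_right_complex, MulOpposite.op_smul]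
  star_inner x y := by
    rw [← MulOpposite.op_star, CStarModuleOld.star_inner]
  norm_eq_sqrt_norm_inner_self x := CStarModuleOld.norm_eq_sqrt_norm_inner_self (A := A) x

variable {A V : Type*} [NonUnitalCStarAlgebra A] [PartialOrder A] [StarOrderedRing A]
  [NormedAddCommGroup V] [NormedSpace ℂ V] [SMul Aᵐᵒᵖ V] [CStarModuleOld A V] [CompleteSpace V]

/-- The element of the Hilbert `A`-module `A ⊕ V` with components `a : A` and `y : V`. -/
def pairElem (a : A) (y : V) : WithCStarModule Aᵐᵒᵖ (A × V) :=
  (WithCStarModule.equiv Aᵐᵒᵖ (A × V)).symm (a, y)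

/-- `IsM M` asserts that for every `x : V` and every unimodular `lam : ℂ`, the continuous
linear map `M x lam` is the operator `M_{x,lam} : (a, y) ↦ (conj lam • ⟪x, y⟫, lam • (x <• a))`
on `A ⊕ V`. -/
def IsM (M : V → ℂ → (WithCStarModule Aᵐᵒᵖ (A × V) →L[ℂ] WithCStarModule Aᵐᵒᵖ (A × V))) : Prop :=
  ∀ (x : V) (lam : ℂ), ‖lam‖ = 1 → ∀ (a : A) (y : V),
    M x lam (pairElem a y) = pairElem ((starRingEnd ℂ) lam • ⟪x, y⟫_A) (lam • (x <• a))

/-- The numerical radius `Ω(x) = (1/2) * sup_{|lam| = 1} ‖M_{x,lam}‖`. -/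
def numRadius (M : V → ℂ → (WithCStarModule Aᵐᵒᵖ (A × V) →L[ℂ] WithCStarModule Aᵐᵒᵖ (A × V)))
    (x : V) : ℝ :=
  (1 / 2) * sSup ((fun lam : ℂ => ‖M x lam‖) '' {lam : ℂ | ‖lam‖ = 1})

/-- `IsTheta Θ` asserts that for all `x y : V`, the continuous linear map `Θ x y` is the
"compact" operator `θ_{x,y} : V → V`, `z ↦ x <• ⟪y, z⟫`. -/
def IsTheta (Θ : V → V → (V →L[ℂ] V)) : Prop :=
  ∀ (x y z : V), Θ x y z = x <• ⟪y, z⟫_A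

set_option linter.unusedSectionVars false

lemma norm_sq_eq_old {x : V} : ‖x‖ ^ 2 = ‖⟪x, x⟫_A‖ := by
  rw [CStarModuleOld.norm_eq_sqrt_norm_inner_self (A := A) x, Real.sq_sqrt (norm_nonneg _)]

lemma inner_op_smul_left_old {a : A} {x y : V} : ⟪x <• a, y⟫_A = star a * ⟪x, y⟫_A := by
  rw [← CStarModuleOld.star_inner y, CStarModuleOld.inner_op_smul_right, star_mul,
    CStarModuleOld.star_inner]

lemma norm_inner_le_old {x y : V} : ‖⟪x, y⟫_A‖ ≤ ‖x‖ * ‖y‖ :=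
  CStarModule.norm_inner_le (A := Aᵐᵒᵖ) (E := V) (x := x) (y := y)

lemma norm_op_smul_le' (x : V) (a : A) : ‖x <• a‖ ≤ ‖x‖ * ‖a‖ := by
  have h : ‖x <• a‖ ^ 2 ≤ (‖x‖ * ‖a‖) ^ 2 := by
    rw [norm_sq_eq_old, inner_op_smul_left_old, CStarModuleOld.inner_op_smul_right,
      ← mul_assoc]
    calc ‖star a * ⟪x, x⟫_A * a‖ ≤ ‖star a‖ * ‖⟪x, x⟫_A‖ * ‖a‖ := by
          exact (norm_mul_le _ _).trans (by gcongr; exact norm_mul_le _ _)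
      _ = ‖⟪x, x⟫_A‖ * ‖a‖ ^ 2 := by rw [norm_star]; ring
      _ = (‖x‖ * ‖a‖) ^ 2 := by rw [← norm_sq_eq_old]; ring
  have := Real.sqrt_le_sqrt h
  rwa [Real.sqrt_sq (norm_nonneg _), Real.sqrt_sq (by positivity)] at this

lemma norm_fst_le_pairElem (a : A) (y : V) : ‖a‖ ≤ ‖pairElem a y‖ := by
  refine le_trans ?_ (WithCStarModule.max_le_prod_norm (pairElem a y))
  exact le_max_left _ _

lemma norm_snd_le_pairElem (a : A) (y : V) : ‖y‖ ≤ ‖pairElem a y‖ := by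
  refine le_trans ?_ (WithCStarModule.max_le_prod_norm (pairElem a y))
  exact le_max_right _ _

lemma pairElem_zero_fst (y : V) : ‖pairElem (0 : A) y‖ = ‖y‖ := by
  rw [WithCStarModule.prod_norm]
  show √‖inner Aᵐᵒᵖ (0:A) (0:A) + inner Aᵐᵒᵖ y y‖ = ‖y‖
  rw [CStarModule.inner_zero_left, zero_add, ← CStarModule.norm_eq_sqrt_norm_inner_self]

lemma opNorm_M_le (M : V → ℂ → (WithCStarModule Aᵐᵒᵖ (A × V) →L[ℂ] WithCStarModule Aᵐᵒᵖ (A × V)))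
    (hM : IsM M) (x : V) {lam : ℂ} (hl : ‖lam‖ = 1) : ‖M x lam‖ ≤ 2 * ‖x‖ := by
  refine ContinuousLinearMap.opNorm_le_bound _ (by positivity) fun u => ?_
  have hu : u = pairElem u.1 u.2 := rfl
  rw [hu, hM x lam hl u.1 u.2]
  calc ‖pairElem ((starRingEnd ℂ) lam • ⟪x, u.2⟫_A) (lam • (x <• u.1))‖
      ≤ ‖(starRingEnd ℂ) lam • ⟪x, u.2⟫_A‖ + ‖lam • (x <• u.1)‖ :=
        WithCStarModule.prod_norm_le_norm_add _
    _ = ‖⟪x, u.2⟫_A‖ + ‖x <• u.1‖ := by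
        rw [norm_smul, norm_smul, RCLike.norm_conj, hl, one_mul, one_mul]
    _ ≤ ‖x‖ * ‖u.2‖ + ‖x‖ * ‖u.1‖ :=
        add_le_add norm_inner_le_old (norm_op_smul_le' x u.1)
    _ ≤ ‖x‖ * ‖pairElem u.1 u.2‖ + ‖x‖ * ‖pairElem u.1 u.2‖ := by
        gcongr
        · exact norm_snd_le_pairElem _ _
        · exact norm_fst_le_pairElem _ _
    _ = 2 * ‖x‖ * ‖pairElem u.1 u.2‖ := by ring
    _ = 2 * ‖x‖ * ‖u‖ := by rw [← hu]

lemma norm_le_opNorm_M (M : V → ℂ → (WithCStarModule Aᵐᵒᵖ (A × V) →L[ℂ] WithCStarModule Aᵐᵒᵖ (A × V)))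
    (hM : IsM M) (x : V) : ‖x‖ ≤ ‖M x 1‖ := by
  have h1 : ‖(1 : ℂ)‖ = 1 := by simp
  have key : ‖x‖ ^ 2 ≤ ‖M x 1‖ * ‖x‖ := by
    calc ‖x‖ ^ 2 = ‖⟪x, x⟫_A‖ := norm_sq_eq_old
      _ = ‖(starRingEnd ℂ) 1 • ⟪x, x⟫_A‖ := by simp
      _ ≤ ‖pairElem ((starRingEnd ℂ) 1 • ⟪x, x⟫_A) ((1 : ℂ) • (x <• (0 : A)))‖ :=
          norm_fst_le_pairElem _ _
      _ = ‖M x 1 (pairElem 0 x)‖ := by rw [hM x 1 h1 0 x]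
      _ ≤ ‖M x 1‖ * ‖pairElem (0 : A) x‖ := (M x 1).le_opNorm _
      _ = ‖M x 1‖ * ‖x‖ := by rw [pairElem_zero_fst]
  rcases eq_or_ne x 0 with rfl | hx
  · simp only [norm_zero]; exact norm_nonneg (M 0 1)
  · have hxpos : 0 < ‖x‖ := norm_pos_iff.mpr hx
    nlinarith

lemma norm_le_two_numRadius (M : V → ℂ → (WithCStarModule Aᵐᵒᵖ (A × V) →L[ℂ] WithCStarModule Aᵐᵒᵖ (A × V)))
    (hM : IsM M) (x : V) : ‖x‖ ≤ 2 * numRadius M x := by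
  have hmem : ‖M x 1‖ ∈ (fun lam : ℂ => ‖M x lam‖) '' {lam : ℂ | ‖lam‖ = 1} :=
    ⟨1, by simp, rfl⟩
  have hbdd : BddAbove ((fun lam : ℂ => ‖M x lam‖) '' {lam : ℂ | ‖lam‖ = 1}) := by
    refine ⟨2 * ‖x‖, ?_⟩
    rintro r ⟨lam, hl, rfl⟩
    exact opNorm_M_le M hM x hl
  have := le_csSup hbdd hmem
  have h := (norm_le_opNorm_M M hM x).trans this
  unfold numRadius
  linarith

theorem stmt15 (M : V → ℂ → (WithCStarModule Aᵐᵒᵖ (A × V) →L[ℂ] WithCStarModule Aᵐᵒᵖ (A × V))) (hM : IsM M) (Θ : V → V → (V →L[ℂ] V)) (hΘ : IsTheta Θ) (x y : V) :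
    (1 / 2) * (numRadius M x + numRadius M y +
      Real.sqrt ((numRadius M x - numRadius M y) ^ 2 + max ‖⟪x, y⟫_A‖ ‖Θ x y‖)) ≤
      numRadius M x + numRadius M y := by
  set a := numRadius M x with ha
  set b := numRadius M y with hb
  have hxa : ‖x‖ ≤ 2 * a := norm_le_two_numRadius M hM x
  have hyb : ‖y‖ ≤ 2 * b := norm_le_two_numRadius M hM y
  have ha0 : 0 ≤ a := by have := norm_nonneg x; linarith
  have hb0 : 0 ≤ b := by have := norm_nonneg y; linarith
  have hK : max ‖⟪x, y⟫_A‖ ‖Θ x y‖ ≤ 4 * a * b := by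
    have h1 : ‖⟪x, y⟫_A‖ ≤ ‖x‖ * ‖y‖ := norm_inner_le_old
    have h2 : ‖Θ x y‖ ≤ ‖x‖ * ‖y‖ := by
      refine ContinuousLinearMap.opNorm_le_bound _ (by positivity) fun z => ?_
      rw [hΘ x y z]
      calc ‖x <• ⟪y, z⟫_A‖ ≤ ‖x‖ * ‖⟪y, z⟫_A‖ := norm_op_smul_le' _ _
        _ ≤ ‖x‖ * (‖y‖ * ‖z‖) := by gcongr; exact norm_inner_le_old
        _ = ‖x‖ * ‖y‖ * ‖z‖ := by ring
    have hxy : ‖x‖ * ‖y‖ ≤ 4 * a * b := by nlinarith [norm_nonneg x, norm_nonneg y]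
    exact max_le (h1.trans hxy) (h2.trans hxy)
  have hsq : (a - b) ^ 2 + max ‖⟪x, y⟫_A‖ ‖Θ x y‖ ≤ (a + b) ^ 2 := by nlinarith
  have hs : Real.sqrt ((a - b) ^ 2 + max ‖⟪x, y⟫_A‖ ‖Θ x y‖) ≤ a + b := by
    have := Real.sqrt_le_sqrt hsq
    rwa [Real.sqrt_sq (by linarith)] at this
  linarith
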